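/- Let 𝒰 = {1, 2, 3}. For every Δ with Δ_min ≤ Δ ≤ Δ_max, the minimum of I(X_S ∧ Y | S, U) over all triples (P_U, σ, W) with E[d(X, Y)] ≤ Δ equals the minimum of I(X_S ∧ Y | S, U) over triples (P_U, σ, W) with E[d(X, Y)] ≤ Δ in which σ is a conditional point-mass sampler σ(A|x,u) = 1(A = h(x,u)) for some map h : 𝒳_ℳ × 𝒰 → 𝒜_k. Here Δ_min is the minimum over sampler kernels σ(·|x) on 𝒜_k of Σ_{A} Σ_{x_A-values} min_{y ∈ 𝒴} Σ_{x : x restricted to A equals x_A} P(x) σ(A|x) d(x, y), and Δ_max is the minimum over sampler kernels σ(·|x) of Σ_A Pr(S = A) min_{y ∈ 𝒴} E[d(X, y) | S = A]. -/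

import Mathlib

noncomputable section

/-- A probability mass function on a finite type. -/
def IsPMF {T : Type*} [Fintype T] (p : T → ℝ) : Prop :=
  (∀ t, 0 ≤ p t) ∧ ∑ t, p t = 1

/-- Mutual information of a joint pmf `Q` on a product of two finite types;
terms with `Q p = 0` vanish since `0 * log _ = 0`. -/
def mutInfo {α β : Type*} [Fintype α] [Fintype β] (Q : α × β → ℝ) : ℝ :=
  ∑ p : α × β, Q p * Real.log (Q p / ((∑ b, Q (p.1, b)) * (∑ a, Q (a, p.2))))

/-- The family `𝒜_k` of `k`-element subsets of `{1, …, m}`. -/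
abbrev SetsK (m k : ℕ) := {A : Finset (Fin m) // A.card = k}

variable {m : ℕ} {X : Fin m → Type} [∀ i, Fintype (X i)] [∀ i, DecidableEq (X i)]
  [∀ i, Nonempty (X i)] {Y : Type} [Fintype Y] [Nonempty Y]

/-- Restriction of `x ∈ 𝒳_ℳ` to the coordinates in `A`. -/
def restr (A : Finset (Fin m)) (x : ∀ i, X i) : ∀ i : A, X i.1 := fun i => x i.1

/-- The marginal pmf `P_{X_A}` of the coordinates in `A`. -/
def margA (P : (∀ i, X i) → ℝ) (A : Finset (Fin m)) (xA : ∀ i : A, X i.1) : ℝ :=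
  ∑ x : ∀ i, X i, if restr A x = xA then P x else 0

/-- The modified distortion `d_A(x_A, y)`. -/
def dAk (P : (∀ i, X i) → ℝ) (d : (∀ i, X i) → Y → ℝ) (A : Finset (Fin m))
    (xA : ∀ i : A, X i.1) (y : Y) : ℝ :=
  (∑ x : ∀ i, X i, if restr A x = xA then P x * d x y else 0) / margA P A xA

/-- The fixed-set rate distortion function `R_A(Δ)`: the minimum of `I(X_A ∧ Y)` over
joint pmfs of `(X_A, Y)` with first marginal `P_{X_A}` and `E[d_A(X_A,Y)] ≤ Δ`. -/
def RAk (P : (∀ i, X i) → ℝ) (d : (∀ i, X i) → Y → ℝ) (A : Finset (Fin m)) (Δ : ℝ) : ℝ :=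
  sInf {r | ∃ Q : (∀ i : A, X i.1) × Y → ℝ, IsPMF Q ∧
    (∀ xA, ∑ y, Q (xA, y) = margA P A xA) ∧
    (∑ p : (∀ i : A, X i.1) × Y, Q p * dAk P d A p.1 p.2) ≤ Δ ∧ mutInfo Q = r}

/-- `Δ_min,A = Σ_{x_A} P_{X_A}(x_A) min_y d_A(x_A, y)`. -/
def DminA (P : (∀ i, X i) → ℝ) (d : (∀ i, X i) → Y → ℝ) (A : Finset (Fin m)) : ℝ :=
  ∑ xA : ∀ i : A, X i.1,
    margA P A xA * Finset.univ.inf' Finset.univ_nonempty (fun y => dAk P d A xA y)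

variable {U : Type} [Fintype U]

/-- A memoryless sampler kernel `σ(·|x, u)`: a pmf on `𝒜_k` for each `(x, u)`. -/
def IsSamplerU (k : ℕ) (σ : (∀ i, X i) → U → SetsK m k → ℝ) : Prop :=
  ∀ x u, IsPMF (σ x u)

/-- A reconstruction kernel `W(·|A, x_A, u)`: a pmf on `𝒴` for each `(A, x_A, u)`. -/
def IsKernelWU (k : ℕ) (W : ∀ A : SetsK m k, (∀ i : A.1, X i.1) → U → Y → ℝ) : Prop :=
  ∀ A xA u, IsPMF (W A xA u)

/-- `Pr(U = u, S = A)` under the joint pmf `P_U(u) P(x) σ(A|x,u) W(y|A,x_A,u)`. -/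
def prSU (k : ℕ) (P : (∀ i, X i) → ℝ) (PU : U → ℝ)
    (σ : (∀ i, X i) → U → SetsK m k → ℝ) (u : U) (A : SetsK m k) : ℝ :=
  PU u * ∑ x, P x * σ x u A

/-- The conditional joint pmf of `(X_A, Y)` given `S = A, U = u`. -/
def condQU (k : ℕ) (P : (∀ i, X i) → ℝ) (PU : U → ℝ)
    (σ : (∀ i, X i) → U → SetsK m k → ℝ)
    (W : ∀ A : SetsK m k, (∀ i : A.1, X i.1) → U → Y → ℝ)
    (u : U) (A : SetsK m k) : (∀ i : A.1, X i.1) × Y → ℝ := fun p =>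
  (∑ x, if restr A.1 x = p.1 then PU u * P x * σ x u A * W A p.1 u p.2 else 0) /
    prSU k P PU σ u A

/-- The conditional mutual information
`I(X_S ∧ Y | S, U) = Σ_{u,A} Pr(U = u, S = A) I_{u,A}`. -/
def condMIU (k : ℕ) (P : (∀ i, X i) → ℝ) (PU : U → ℝ)
    (σ : (∀ i, X i) → U → SetsK m k → ℝ)
    (W : ∀ A : SetsK m k, (∀ i : A.1, X i.1) → U → Y → ℝ) : ℝ :=
  ∑ u : U, ∑ A : SetsK m k, prSU k P PU σ u A * mutInfo (condQU k P PU σ W u A)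

/-- The expected distortion `E[d(X,Y)]` under the joint pmf
`P_U(u) P(x) σ(A|x,u) W(y|A,x_A,u)`. -/
def expDistMRS (k : ℕ) (P : (∀ i, X i) → ℝ) (d : (∀ i, X i) → Y → ℝ) (PU : U → ℝ)
    (σ : (∀ i, X i) → U → SetsK m k → ℝ)
    (W : ∀ A : SetsK m k, (∀ i : A.1, X i.1) → U → Y → ℝ) : ℝ :=
  ∑ u : U, ∑ x : ∀ i, X i, ∑ A : SetsK m k, ∑ y,
    PU u * P x * σ x u A * W A (restr A.1 x) u y * d x y


/-! ### Auxiliary development for `stmt15` -/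

section Stmt15Aux

open Finset

/-- Gibbs' inequality in log-difference form. -/
private lemma gibbs0 {ι : Type*} [Fintype ι] (a b : ι → ℝ) (ha : ∀ i, 0 ≤ a i)
    (hb : ∀ i, 0 ≤ b i) (hab : ∀ i, b i = 0 → a i = 0) (hs : ∑ i, b i ≤ ∑ i, a i) :
    0 ≤ ∑ i, a i * (Real.log (a i) - Real.log (b i)) := by
  have key : ∀ i, a i * (Real.log (b i) - Real.log (a i)) ≤ b i - a i := by
    intro i
    rcases eq_or_lt_of_le (ha i) with h0 | hpos
    · rw [← h0]; simpa using hb i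
    · have hbne : b i ≠ 0 := fun h => by
        have := hab i h; rw [this] at hpos; exact lt_irrefl 0 hpos
      have hbpos : 0 < b i := (hb i).lt_of_ne (Ne.symm hbne)
      have hlog : Real.log (b i) - Real.log (a i) = Real.log (b i / a i) :=
        (Real.log_div hbpos.ne' hpos.ne').symm
      rw [hlog]
      calc a i * Real.log (b i / a i) ≤ a i * (b i / a i - 1) :=
            mul_le_mul_of_nonneg_left (Real.log_le_sub_one_of_pos (div_pos hbpos hpos)) hpos.le
        _ = b i - a i := by field_simp
  have h2 : ∑ i, a i * (Real.log (b i) - Real.log (a i)) ≤ 0 := by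
    calc ∑ i, a i * (Real.log (b i) - Real.log (a i)) ≤ ∑ i, (b i - a i) :=
          Finset.sum_le_sum fun i _ => key i
      _ = (∑ i, b i) - ∑ i, a i := Finset.sum_sub_distrib _ _
      _ ≤ 0 := by linarith
  have h3 : ∑ i, a i * (Real.log (a i) - Real.log (b i))
      = -∑ i, a i * (Real.log (b i) - Real.log (a i)) := by
    rw [← Finset.sum_neg_distrib]
    exact Finset.sum_congr rfl fun i _ => by ring
  rw [h3]; linarith

/-- Nonnegativity of mutual information for a pmf. -/
private lemma mutInfo_nonneg' {α β : Type*} [Fintype α] [Fintype β] (Q : α × β → ℝ)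
    (hQ : ∀ p, 0 ≤ Q p) (hQ1 : ∑ p, Q p = 1) : 0 ≤ mutInfo Q := by
  have hm1 : ∀ p : α × β, 0 ≤ ∑ b, Q (p.1, b) := fun p => Finset.sum_nonneg fun b _ => hQ _
  have hm2 : ∀ p : α × β, 0 ≤ ∑ a, Q (a, p.2) := fun p => Finset.sum_nonneg fun a _ => hQ _
  have hQle1 : ∀ p : α × β, Q p ≤ ∑ b, Q (p.1, b) := fun p => by
    simpa using Finset.single_le_sum (f := fun b => Q (p.1, b)) (fun b _ => hQ _)
      (Finset.mem_univ p.2)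
  have hQle2 : ∀ p : α × β, Q p ≤ ∑ a, Q (a, p.2) := fun p => by
    simpa using Finset.single_le_sum (f := fun a => Q (a, p.2)) (fun a _ => hQ _)
      (Finset.mem_univ p.1)
  have heq : mutInfo Q = ∑ p : α × β,
      Q p * (Real.log (Q p) - Real.log ((∑ b, Q (p.1, b)) * (∑ a, Q (a, p.2)))) := by
    rw [mutInfo]
    refine Finset.sum_congr rfl fun p _ => ?_
    by_cases h : Q p = 0
    · rw [h, zero_mul, zero_mul]
    · have hQp : 0 < Q p := (hQ p).lt_of_ne (Ne.symm h)
      have h1 : 0 < ∑ b, Q (p.1, b) := lt_of_lt_of_le hQp (hQle1 p)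
      have h2 : 0 < ∑ a, Q (a, p.2) := lt_of_lt_of_le hQp (hQle2 p)
      rw [Real.log_div h (mul_pos h1 h2).ne']
  rw [heq]
  apply gibbs0 Q (fun p => (∑ b, Q (p.1, b)) * (∑ a, Q (a, p.2))) hQ
    (fun p => mul_nonneg (hm1 p) (hm2 p))
  · intro p h
    rcases mul_eq_zero.1 h with h' | h'
    · exact le_antisymm (h' ▸ hQle1 p) (hQ p)
    · exact le_antisymm (h' ▸ hQle2 p) (hQ p)
  · have e1 : ∑ a, ∑ b, Q (a, b) = 1 := by rw [← Fintype.sum_prod_type]; exact hQ1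
    have e2 : ∑ b, ∑ a, Q (a, b) = 1 := by
      rw [Finset.sum_comm]; rw [← Fintype.sum_prod_type]; exact hQ1
    have : ∑ p : α × β, (∑ b, Q (p.1, b)) * (∑ a, Q (a, p.2)) = 1 := by
      rw [Fintype.sum_prod_type]
      calc ∑ a, ∑ b, (∑ b', Q (a, b')) * (∑ a', Q (a', b))
          = (∑ a, ∑ b', Q (a, b')) * (∑ b, ∑ a', Q (a', b)) := by
            rw [Finset.sum_mul_sum]
        _ = 1 := by rw [e1, e2, one_mul]
    rw [this, hQ1]

/-- Identity for the mutual information of an input-distribution/channel pair. -/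
private lemma mutInfo_kernel_eq {S Y' : Type*} [Fintype S] [Fintype Y'] (p : S → ℝ)
    (hp : ∀ s, 0 ≤ p s) (W : S → Y' → ℝ) (hW : ∀ s y, 0 ≤ W s y)
    (hW1 : ∀ s, ∑ y, W s y = 1) :
    mutInfo (fun pr : S × Y' => p pr.1 * W pr.1 pr.2)
      = ∑ s, ∑ y, p s * W s y * (Real.log (W s y) - Real.log (∑ t, p t * W t y)) := by
  rw [mutInfo, Fintype.sum_prod_type]
  refine Finset.sum_congr rfl fun s _ => Finset.sum_congr rfl fun y _ => ?_
  simp only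
  have hm1 : (∑ b, p s * W s b) = p s := by rw [← Finset.mul_sum, hW1, mul_one]
  rw [hm1]
  by_cases h : p s * W s y = 0
  · rw [h, zero_mul, zero_mul]
  · rcases mul_ne_zero_iff.1 h with ⟨hps, hWs⟩
    have hps' : 0 < p s := (hp s).lt_of_ne (Ne.symm hps)
    have hWs' : 0 < W s y := (hW s y).lt_of_ne (Ne.symm hWs)
    have hq : 0 < ∑ t, p t * W t y :=
      lt_of_lt_of_le (mul_pos hps' hWs')
        (Finset.single_le_sum (f := fun t => p t * W t y)
          (fun t _ => mul_nonneg (hp t) (hW t y)) (Finset.mem_univ s))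
    congr 1
    rw [mul_div_mul_left _ _ hps, Real.log_div hWs hq.ne']

/-- Gibbs comparison step: replacing the output marginal by any other pmf `r`
dominating it can only increase the expression. -/
private lemma gibbs_compare {S Y' : Type*} [Fintype S] [Fintype Y'] (p : S → ℝ)
    (hp : ∀ s, 0 ≤ p s) (hp1 : ∑ s, p s = 1) (W : S → Y' → ℝ) (hW : ∀ s y, 0 ≤ W s y)
    (hW1 : ∀ s, ∑ y, W s y = 1) (r : Y' → ℝ) (hr : ∀ y, 0 ≤ r y) (hr1 : ∑ y, r y ≤ 1)
    (hrq : ∀ y, r y = 0 → (∑ t, p t * W t y) = 0) :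
    ∑ s, ∑ y, p s * W s y * (Real.log (W s y) - Real.log (∑ t, p t * W t y))
      ≤ ∑ s, ∑ y, p s * W s y * (Real.log (W s y) - Real.log (r y)) := by
  have hq0 : ∀ y, 0 ≤ ∑ t, p t * W t y :=
    fun y => Finset.sum_nonneg fun t _ => mul_nonneg (hp t) (hW t y)
  have hqsum : ∑ y, ∑ t, p t * W t y = 1 := by
    rw [Finset.sum_comm]
    calc ∑ t, ∑ y, p t * W t y = ∑ t, p t := by
          refine Finset.sum_congr rfl fun t _ => ?_
          rw [← Finset.mul_sum, hW1, mul_one]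
      _ = 1 := hp1
  have hg : 0 ≤ ∑ y, (∑ t, p t * W t y) *
      (Real.log (∑ t, p t * W t y) - Real.log (r y)) := by
    apply gibbs0 (fun y => ∑ t, p t * W t y) r hq0 hr hrq
    rw [hqsum]; exact hr1
  have hdiff : ∑ s, ∑ y, (p s * W s y * (Real.log (W s y) - Real.log (r y))
      - p s * W s y * (Real.log (W s y) - Real.log (∑ t, p t * W t y)))
      = ∑ y, (∑ t, p t * W t y) * (Real.log (∑ t, p t * W t y) - Real.log (r y)) := by
    rw [Finset.sum_comm]
    refine Finset.sum_congr rfl fun y _ => ?_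
    calc ∑ s, (p s * W s y * (Real.log (W s y) - Real.log (r y))
          - p s * W s y * (Real.log (W s y) - Real.log (∑ t, p t * W t y)))
        = ∑ s, p s * W s y * (Real.log (∑ t, p t * W t y) - Real.log (r y)) :=
          Finset.sum_congr rfl fun s _ => by ring
      _ = (∑ s, p s * W s y) * (Real.log (∑ t, p t * W t y) - Real.log (r y)) :=
          (Finset.sum_mul _ _ _).symm
  have hsplit : ∑ s, ∑ y, (p s * W s y * (Real.log (W s y) - Real.log (r y))
      - p s * W s y * (Real.log (W s y) - Real.log (∑ t, p t * W t y)))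
      = (∑ s, ∑ y, p s * W s y * (Real.log (W s y) - Real.log (r y)))
        - ∑ s, ∑ y, p s * W s y * (Real.log (W s y) - Real.log (∑ t, p t * W t y)) := by
    rw [← Finset.sum_sub_distrib]
    exact Finset.sum_congr rfl fun s _ => Finset.sum_sub_distrib _ _
  rw [hsplit] at hdiff
  linarith [hg, hdiff]

/-- Concavity of mutual information in the input distribution, in unnormalized form. -/
private lemma mi_superadd {S Y' G : Type*} [Fintype S] [Fintype Y'] [Fintype G]
    (w : G → ℝ) (hw : ∀ g, 0 ≤ w g) (n : G → S → ℝ) (hn : ∀ g s, 0 ≤ n g s)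
    (W : S → Y' → ℝ) (hW : ∀ s y, 0 ≤ W s y) (hW1 : ∀ s, ∑ y, W s y = 1) :
    ∑ g, w g * ((∑ s, n g s) * mutInfo (fun p : S × Y' => n g p.1 * W p.1 p.2 / ∑ s, n g s))
      ≤ (∑ g, w g * ∑ s, n g s) *
        mutInfo (fun p : S × Y' =>
          (∑ g, w g * n g p.1) * W p.1 p.2 / ∑ g, w g * ∑ s, n g s) := by
  classical
  set N : G → ℝ := fun g => ∑ s, n g s with hN
  have hN0 : ∀ g, 0 ≤ N g := fun g => Finset.sum_nonneg fun s _ => hn g s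
  set Nt : ℝ := ∑ g, w g * N g with hNt
  have hNt0 : 0 ≤ Nt := Finset.sum_nonneg fun g _ => mul_nonneg (hw g) (hN0 g)
  rcases eq_or_lt_of_le hNt0 with hz | hpos
  · have hz' : ∀ g ∈ Finset.univ (α := G), w g * N g = 0 := fun g hg =>
      (Finset.sum_eq_zero_iff_of_nonneg (fun g _ => mul_nonneg (hw g) (hN0 g))).1 hz.symm g hg
    have l0 : ∑ g, w g * (N g * mutInfo
        (fun p : S × Y' => n g p.1 * W p.1 p.2 / N g)) = 0 :=
      Finset.sum_eq_zero fun g hg => by rw [← mul_assoc, hz' g hg, zero_mul]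
    rw [l0, ← hz, zero_mul]
  · set pb : S → ℝ := fun s => (∑ g, w g * n g s) / Nt with hpb
    have hpb0 : ∀ s, 0 ≤ pb s := fun s =>
      div_nonneg (Finset.sum_nonneg fun g _ => mul_nonneg (hw g) (hn g s)) hNt0
    have hsum_swap : ∑ s, ∑ g, w g * n g s = Nt := by
      rw [Finset.sum_comm]
      exact Finset.sum_congr rfl fun g _ => by rw [← Finset.mul_sum]
    have hpb1 : ∑ s, pb s = 1 := by
      rw [hpb, ← Finset.sum_div, hsum_swap, div_self hpos.ne']
    have hQbar : (fun p : S × Y' => (∑ g, w g * n g p.1) * W p.1 p.2 / Nt)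
        = fun p : S × Y' => pb p.1 * W p.1 p.2 := by
      funext p; rw [hpb]; rw [mul_div_right_comm]
    rw [hQbar, mutInfo_kernel_eq pb hpb0 W hW hW1]
    have hqb0 : ∀ y, 0 ≤ ∑ t, pb t * W t y :=
      fun y => Finset.sum_nonneg fun t _ => mul_nonneg (hpb0 t) (hW t y)
    have hqb1 : ∑ y, ∑ t, pb t * W t y = 1 := by
      rw [Finset.sum_comm]
      calc ∑ t, ∑ y, pb t * W t y = ∑ t, pb t := by
            refine Finset.sum_congr rfl fun t _ => ?_
            rw [← Finset.mul_sum, hW1, mul_one]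
        _ = 1 := hpb1
    have key : ∀ g, w g * (N g * mutInfo (fun p : S × Y' => n g p.1 * W p.1 p.2 / N g))
        ≤ ∑ s, ∑ y, w g * n g s *
            (W s y * (Real.log (W s y) - Real.log (∑ t, pb t * W t y))) := by
      intro g
      rcases eq_or_lt_of_le (mul_nonneg (hw g) (hN0 g)) with hg0 | hgpos
      · have hwn : ∀ s, w g * n g s = 0 := by
          intro s
          rcases mul_eq_zero.1 hg0.symm with h | h
          · rw [h, zero_mul]
          · have : n g s = 0 :=
              (Finset.sum_eq_zero_iff_of_nonneg (fun s _ => hn g s)).1 h s (Finset.mem_univ s)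
            rw [this, mul_zero]
        calc w g * (N g * mutInfo (fun p : S × Y' => n g p.1 * W p.1 p.2 / N g))
            = (w g * N g) * mutInfo (fun p : S × Y' => n g p.1 * W p.1 p.2 / N g) :=
              (mul_assoc _ _ _).symm
          _ = 0 := by rw [← hg0, zero_mul]
          _ ≤ _ := le_of_eq (Finset.sum_eq_zero fun s _ =>
              Finset.sum_eq_zero fun y _ => by rw [hwn s, zero_mul]).symm
      · have hwne : w g ≠ 0 := by
          intro h; rw [h, zero_mul] at hgpos; exact lt_irrefl 0 hgpos
        have hNgne : N g ≠ 0 := by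
          intro h; rw [h, mul_zero] at hgpos; exact lt_irrefl 0 hgpos
        have hNgpos : 0 < N g := (hN0 g).lt_of_ne (Ne.symm hNgne)
        have hQg : (fun p : S × Y' => n g p.1 * W p.1 p.2 / N g)
            = fun p : S × Y' => (n g p.1 / N g) * W p.1 p.2 :=
          funext fun p => mul_div_right_comm _ _ _
        rw [hQg, mutInfo_kernel_eq (fun s => n g s / N g)
          (fun s => div_nonneg (hn g s) (hN0 g)) W hW hW1]
        have hrq : ∀ y, (∑ t, pb t * W t y) = 0 → (∑ t, n g t / N g * W t y) = 0 := by
          intro y h0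
          have hall : ∀ t ∈ Finset.univ (α := S), pb t * W t y = 0 :=
            (Finset.sum_eq_zero_iff_of_nonneg
              (fun t _ => mul_nonneg (hpb0 t) (hW t y))).1 h0
          apply Finset.sum_eq_zero
          intro t _
          rcases mul_eq_zero.1 (hall t (Finset.mem_univ t)) with h | h
          · have hsz : ∑ g', w g' * n g' t = 0 := by
              rcases div_eq_zero_iff.1 h with h' | h'
              · exact h'
              · exact absurd h' hpos.ne'
            have hwz : w g * n g t = 0 :=
              (Finset.sum_eq_zero_iff_of_nonneg
                (fun g' _ => mul_nonneg (hw g') (hn g' t))).1 hsz g (Finset.mem_univ g)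
            have hng : n g t = 0 := by
              rcases mul_eq_zero.1 hwz with h' | h'
              · exact absurd h' hwne
              · exact h'
            rw [hng, zero_div, zero_mul]
          · rw [h, mul_zero]
        have hstep := gibbs_compare (fun s => n g s / N g)
          (fun s => div_nonneg (hn g s) (hN0 g))
          (by rw [← Finset.sum_div, div_self hNgne])
          W hW hW1 (fun y => ∑ t, pb t * W t y) hqb0 (le_of_eq hqb1) hrq
        calc w g * (N g * ∑ s, ∑ y, n g s / N g * W s y *
              (Real.log (W s y) - Real.log (∑ t, n g t / N g * W t y)))
            ≤ w g * (N g * ∑ s, ∑ y, n g s / N g * W s y *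
              (Real.log (W s y) - Real.log (∑ t, pb t * W t y))) := by
              exact mul_le_mul_of_nonneg_left
                (mul_le_mul_of_nonneg_left hstep (hN0 g)) (hw g)
          _ = ∑ s, ∑ y, w g * n g s *
              (W s y * (Real.log (W s y) - Real.log (∑ t, pb t * W t y))) := by
              rw [Finset.mul_sum, Finset.mul_sum]
              refine Finset.sum_congr rfl fun s _ => ?_
              rw [Finset.mul_sum, Finset.mul_sum]
              refine Finset.sum_congr rfl fun y _ => ?_
              field_simp
    calc ∑ g, w g * (N g * mutInfo (fun p : S × Y' => n g p.1 * W p.1 p.2 / N g))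
        ≤ ∑ g, ∑ s, ∑ y, w g * n g s *
            (W s y * (Real.log (W s y) - Real.log (∑ t, pb t * W t y))) :=
          Finset.sum_le_sum fun g _ => key g
      _ = ∑ s, ∑ y, (∑ g, w g * n g s) *
            (W s y * (Real.log (W s y) - Real.log (∑ t, pb t * W t y))) := by
          rw [Finset.sum_comm]
          refine Finset.sum_congr rfl fun s _ => ?_
          rw [Finset.sum_comm]
          refine Finset.sum_congr rfl fun y _ => ?_
          rw [← Finset.sum_mul]
      _ = Nt * ∑ s, ∑ y, pb s * W s y *
            (Real.log (W s y) - Real.log (∑ t, pb t * W t y)) := by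
          rw [Finset.mul_sum]
          refine Finset.sum_congr rfl fun s _ => ?_
          rw [Finset.mul_sum]
          refine Finset.sum_congr rfl fun y _ => ?_
          rw [hpb]
          field_simp

end Stmt15Aux

section Stmt15Plumb

open Finset

variable (k : ℕ)

/-- Deterministic (point-mass) sampler associated to a map `g`. -/
def detS (g : (∀ i, X i) → SetsK m k) : (∀ i, X i) → SetsK m k → ℝ :=
  fun x A => if A = g x then 1 else 0

/-- Per-`u` (slice) expected distortion. -/
def Dsl (P : (∀ i, X i) → ℝ) (d : (∀ i, X i) → Y → ℝ)
    (σu : (∀ i, X i) → SetsK m k → ℝ)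
    (Wu : ∀ A : SetsK m k, (∀ i : A.1, X i.1) → Y → ℝ) : ℝ :=
  ∑ x, ∑ A, ∑ y, P x * σu x A * Wu A (restr A.1 x) y * d x y

/-- Probability of `S = A` in a slice. -/
def Zsl (P : (∀ i, X i) → ℝ) (σu : (∀ i, X i) → SetsK m k → ℝ) (A : SetsK m k) : ℝ :=
  ∑ x, P x * σu x A

/-- Conditional joint pmf of `(X_A, Y)` in a slice. -/
def Qsl (P : (∀ i, X i) → ℝ) (σu : (∀ i, X i) → SetsK m k → ℝ)
    (Wu : ∀ A : SetsK m k, (∀ i : A.1, X i.1) → Y → ℝ) (A : SetsK m k) :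
    (∀ i : A.1, X i.1) × Y → ℝ := fun p =>
  (∑ x, if restr A.1 x = p.1 then P x * σu x A * Wu A p.1 p.2 else 0) / Zsl k P σu A

/-- Slice conditional mutual information. -/
def Msl (P : (∀ i, X i) → ℝ) (σu : (∀ i, X i) → SetsK m k → ℝ)
    (Wu : ∀ A : SetsK m k, (∀ i : A.1, X i.1) → Y → ℝ) : ℝ :=
  ∑ A, Zsl k P σu A * mutInfo (Qsl k P σu Wu A)

/-- Mixture weights of deterministic samplers representing `σu`. -/
def lam (σu : (∀ i, X i) → SetsK m k → ℝ) (g : (∀ i, X i) → SetsK m k) : ℝ :=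
  ∏ x, σu x (g x)

variable {k}

lemma lam_nonneg {σu : (∀ i, X i) → SetsK m k → ℝ} (hσ : ∀ x, IsPMF (σu x))
    (g : (∀ i, X i) → SetsK m k) : 0 ≤ lam k σu g :=
  Finset.prod_nonneg fun x _ => (hσ x).1 _

lemma lam_sum_one {σu : (∀ i, X i) → SetsK m k → ℝ} (hσ : ∀ x, IsPMF (σu x)) :
    ∑ g : (∀ i, X i) → SetsK m k, lam k σu g = 1 := by
  classical
  have h := (Fintype.prod_sum (fun (x : ∀ i, X i) (t : SetsK m k) => σu x t)).symm
  calc ∑ g : (∀ i, X i) → SetsK m k, lam k σu g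
      = ∏ x : ∀ i, X i, ∑ t : SetsK m k, σu x t := h
    _ = ∏ x : ∀ i, X i, (1 : ℝ) := Finset.prod_congr rfl fun x _ => (hσ x).2
    _ = 1 := Finset.prod_const_one

lemma lam_decomp {σu : (∀ i, X i) → SetsK m k → ℝ} (hσ : ∀ x, IsPMF (σu x))
    (x₀ : ∀ i, X i) (A : SetsK m k) :
    ∑ g : (∀ i, X i) → SetsK m k, lam k σu g * detS k g x₀ A = σu x₀ A := by
  classical
  have step : ∀ g : (∀ i, X i) → SetsK m k,
      lam k σu g * detS k g x₀ A
        = ∏ x, (σu x (g x) * if x = x₀ then (if A = g x then 1 else 0) else 1) := by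
    intro g
    rw [Finset.prod_mul_distrib]
    congr 1
    rw [Finset.prod_ite_eq' Finset.univ x₀ (fun x => if A = g x then (1 : ℝ) else 0)]
    rw [if_pos (Finset.mem_univ _)]
    rfl
  rw [Finset.sum_congr rfl fun g _ => step g]
  rw [← Fintype.prod_sum
    (fun (x : ∀ i, X i) (t : SetsK m k) =>
      σu x t * if x = x₀ then (if A = t then 1 else 0) else 1)]
  rw [Finset.prod_eq_single x₀]
  · simp [mul_ite, Finset.sum_ite_eq]
  · intro x _ hx
    simp only [if_neg hx, mul_one]
    exact (hσ x).2
  · intro h; exact absurd (Finset.mem_univ x₀) h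

lemma lam_lin1 {σu : (∀ i, X i) → SetsK m k → ℝ} (hσ : ∀ x, IsPMF (σu x))
    (t : (∀ i, X i) → ℝ) (A : SetsK m k) :
    ∑ g : (∀ i, X i) → SetsK m k, lam k σu g * (∑ x, t x * detS k g x A)
      = ∑ x, t x * σu x A := by
  classical
  calc ∑ g : (∀ i, X i) → SetsK m k, lam k σu g * (∑ x, t x * detS k g x A)
      = ∑ g : (∀ i, X i) → SetsK m k, ∑ x, lam k σu g * (t x * detS k g x A) := by
        exact Finset.sum_congr rfl fun g _ => Finset.mul_sum _ _ _
    _ = ∑ x, ∑ g : (∀ i, X i) → SetsK m k, lam k σu g * (t x * detS k g x A) :=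
        Finset.sum_comm
    _ = ∑ x, t x * σu x A := by
        refine Finset.sum_congr rfl fun x _ => ?_
        calc ∑ g : (∀ i, X i) → SetsK m k, lam k σu g * (t x * detS k g x A)
            = t x * ∑ g : (∀ i, X i) → SetsK m k, lam k σu g * detS k g x A := by
              rw [Finset.mul_sum]
              exact Finset.sum_congr rfl fun g _ => by ring
          _ = t x * σu x A := by rw [lam_decomp hσ]

lemma Zsl_decomp {σu : (∀ i, X i) → SetsK m k → ℝ} (hσ : ∀ x, IsPMF (σu x))
    (P : (∀ i, X i) → ℝ) (A : SetsK m k) :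
    ∑ g : (∀ i, X i) → SetsK m k, lam k σu g * Zsl k P (detS k g) A = Zsl k P σu A :=
  lam_lin1 hσ P A

lemma Dsl_alt (P : (∀ i, X i) → ℝ) (d : (∀ i, X i) → Y → ℝ)
    (τ : (∀ i, X i) → SetsK m k → ℝ)
    (Wu : ∀ A : SetsK m k, (∀ i : A.1, X i.1) → Y → ℝ) :
    Dsl k P d τ Wu
      = ∑ A, ∑ x, (∑ y, P x * Wu A (restr A.1 x) y * d x y) * τ x A := by
  rw [Dsl, Finset.sum_comm]
  refine Finset.sum_congr rfl fun A _ => Finset.sum_congr rfl fun x _ => ?_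
  rw [Finset.sum_mul]
  exact Finset.sum_congr rfl fun y _ => by ring

lemma Dsl_decomp {σu : (∀ i, X i) → SetsK m k → ℝ} (hσ : ∀ x, IsPMF (σu x))
    (P : (∀ i, X i) → ℝ) (d : (∀ i, X i) → Y → ℝ)
    (Wu : ∀ A : SetsK m k, (∀ i : A.1, X i.1) → Y → ℝ) :
    ∑ g : (∀ i, X i) → SetsK m k, lam k σu g * Dsl k P d (detS k g) Wu
      = Dsl k P d σu Wu := by
  classical
  calc ∑ g : (∀ i, X i) → SetsK m k, lam k σu g * Dsl k P d (detS k g) Wu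
      = ∑ g : (∀ i, X i) → SetsK m k, ∑ A, lam k σu g *
          (∑ x, (∑ y, P x * Wu A (restr A.1 x) y * d x y) * detS k g x A) := by
        refine Finset.sum_congr rfl fun g _ => ?_
        rw [Dsl_alt, Finset.mul_sum]
    _ = ∑ A, ∑ g : (∀ i, X i) → SetsK m k, lam k σu g *
          (∑ x, (∑ y, P x * Wu A (restr A.1 x) y * d x y) * detS k g x A) :=
        Finset.sum_comm
    _ = ∑ A, ∑ x, (∑ y, P x * Wu A (restr A.1 x) y * d x y) * σu x A := by
        refine Finset.sum_congr rfl fun A _ => ?_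
        exact lam_lin1 hσ _ A
    _ = Dsl k P d σu Wu := (Dsl_alt P d σu Wu).symm

lemma expDist_slices (P : (∀ i, X i) → ℝ) (d : (∀ i, X i) → Y → ℝ) (PU : U → ℝ)
    (σ : (∀ i, X i) → U → SetsK m k → ℝ)
    (W : ∀ A : SetsK m k, (∀ i : A.1, X i.1) → U → Y → ℝ) :
    expDistMRS k P d PU σ W
      = ∑ u, PU u * Dsl k P d (fun x A => σ x u A) (fun A s => W A s u) := by
  rw [expDistMRS]
  refine Finset.sum_congr rfl fun u _ => ?_
  rw [Dsl, Finset.mul_sum]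
  refine Finset.sum_congr rfl fun x _ => ?_
  rw [Finset.mul_sum]
  refine Finset.sum_congr rfl fun A _ => ?_
  rw [Finset.mul_sum]
  refine Finset.sum_congr rfl fun y _ => ?_
  ring

lemma condMIU_slices (P : (∀ i, X i) → ℝ) (PU : U → ℝ)
    (σ : (∀ i, X i) → U → SetsK m k → ℝ)
    (W : ∀ A : SetsK m k, (∀ i : A.1, X i.1) → U → Y → ℝ) :
    condMIU k P PU σ W
      = ∑ u, PU u * Msl k P (fun x A => σ x u A) (fun A s => W A s u) := by
  rw [condMIU]
  refine Finset.sum_congr rfl fun u _ => ?_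
  rw [Msl, Finset.mul_sum]
  refine Finset.sum_congr rfl fun A _ => ?_
  by_cases h : PU u = 0
  · simp [prSU, h]
  · have h1 : prSU k P PU σ u A = PU u * Zsl k P (fun x A => σ x u A) A := rfl
    have h2 : condQU k P PU σ W u A
        = Qsl k P (fun x A => σ x u A) (fun A s => W A s u) A := by
      funext p
      have hnum : (∑ x, if restr A.1 x = p.1
            then PU u * P x * σ x u A * W A p.1 u p.2 else 0)
          = PU u * ∑ x, if restr A.1 x = p.1 then P x * σ x u A * W A p.1 u p.2 else 0 := by
        rw [Finset.mul_sum]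
        refine Finset.sum_congr rfl fun x _ => ?_
        split <;> ring
      show (∑ x, if restr A.1 x = p.1
            then PU u * P x * σ x u A * W A p.1 u p.2 else 0) / prSU k P PU σ u A
          = (∑ x, if restr A.1 x = p.1 then P x * σ x u A * W A p.1 u p.2 else 0) /
            Zsl k P (fun x A => σ x u A) A
      rw [hnum, h1, mul_div_mul_left _ _ h]
    rw [h1, h2]
    ring

lemma Qsl_sum_one (P : (∀ i, X i) → ℝ)
    (σu : (∀ i, X i) → SetsK m k → ℝ)
    (Wu : ∀ A : SetsK m k, (∀ i : A.1, X i.1) → Y → ℝ)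
    (hWu : ∀ A s, IsPMF (Wu A s)) (A : SetsK m k) :
    ∑ s : ∀ i : A.1, X i.1, ∑ y,
        (∑ x, if restr A.1 x = s then P x * σu x A * Wu A s y else 0)
      = Zsl k P σu A := by
  classical
  calc ∑ s : ∀ i : A.1, X i.1, ∑ y,
        (∑ x, if restr A.1 x = s then P x * σu x A * Wu A s y else 0)
      = ∑ s : ∀ i : A.1, X i.1, ∑ x, ∑ y,
          (if restr A.1 x = s then P x * σu x A * Wu A s y else 0) :=
        Finset.sum_congr rfl fun s _ => Finset.sum_comm
    _ = ∑ s : ∀ i : A.1, X i.1, ∑ x,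
          (if restr A.1 x = s then P x * σu x A else 0) := by
        refine Finset.sum_congr rfl fun s _ => Finset.sum_congr rfl fun x _ => ?_
        by_cases h : restr A.1 x = s
        · simp only [if_pos h]
          rw [← Finset.mul_sum, (hWu A s).2, mul_one]
        · simp only [if_neg h, Finset.sum_const_zero]
    _ = ∑ x, ∑ s : ∀ i : A.1, X i.1,
          (if restr A.1 x = s then P x * σu x A else 0) := Finset.sum_comm
    _ = ∑ x, P x * σu x A := by
        refine Finset.sum_congr rfl fun x _ => ?_
        rw [Finset.sum_ite_eq, if_pos (Finset.mem_univ _)]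
    _ = Zsl k P σu A := rfl

lemma Msl_nonneg (P : (∀ i, X i) → ℝ) (hP0 : ∀ x, 0 ≤ P x)
    (σu : (∀ i, X i) → SetsK m k → ℝ) (hσ0 : ∀ x A, 0 ≤ σu x A)
    (Wu : ∀ A : SetsK m k, (∀ i : A.1, X i.1) → Y → ℝ)
    (hWu : ∀ A s, IsPMF (Wu A s)) : 0 ≤ Msl k P σu Wu := by
  classical
  apply Finset.sum_nonneg
  intro A _
  have hZ0 : 0 ≤ Zsl k P σu A :=
    Finset.sum_nonneg fun x _ => mul_nonneg (hP0 x) (hσ0 x A)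
  rcases eq_or_lt_of_le hZ0 with h0 | hpos
  · rw [← h0, zero_mul]
  · apply mul_nonneg hpos.le
    apply mutInfo_nonneg'
    · intro p
      apply div_nonneg _ hpos.le
      apply Finset.sum_nonneg
      intro x _
      split
      · exact mul_nonneg (mul_nonneg (hP0 x) (hσ0 x A)) ((hWu A p.1).1 p.2)
      · exact le_rfl
    · rw [Fintype.sum_prod_type]
      have : ∑ s : ∀ i : A.1, X i.1, ∑ y, Qsl k P σu Wu A (s, y)
          = (∑ s : ∀ i : A.1, X i.1, ∑ y,
              (∑ x, if restr A.1 x = s then P x * σu x A * Wu A s y else 0)) /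
            Zsl k P σu A := by
        rw [Finset.sum_div]
        refine Finset.sum_congr rfl fun s _ => ?_
        rw [Finset.sum_div]
        exact Finset.sum_congr rfl fun y _ => rfl
      rw [this, Qsl_sum_one P σu Wu hWu A, div_self hpos.ne']

lemma Msl_le (P : (∀ i, X i) → ℝ) (hP0 : ∀ x, 0 ≤ P x)
    (σu : (∀ i, X i) → SetsK m k → ℝ) (hσ : ∀ x, IsPMF (σu x))
    (Wu : ∀ A : SetsK m k, (∀ i : A.1, X i.1) → Y → ℝ)
    (hWu : ∀ A s, IsPMF (Wu A s)) :
    ∑ g : (∀ i, X i) → SetsK m k, lam k σu g * Msl k P (detS k g) Wu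
      ≤ Msl k P σu Wu := by
  classical
  have hswap : ∑ g : (∀ i, X i) → SetsK m k, lam k σu g * Msl k P (detS k g) Wu
      = ∑ A, ∑ g : (∀ i, X i) → SetsK m k,
          lam k σu g * (Zsl k P (detS k g) A * mutInfo (Qsl k P (detS k g) Wu A)) := by
    rw [← Finset.sum_comm]
    refine Finset.sum_congr rfl fun g _ => ?_
    rw [Msl, Finset.mul_sum]
  rw [hswap, Msl]
  refine Finset.sum_le_sum fun A _ => ?_
  set n : ((∀ i, X i) → SetsK m k) → (∀ i : A.1, X i.1) → ℝ :=
    fun g s => ∑ x, if restr A.1 x = s then P x * detS k g x A else 0 with hn_def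
  have hdet0 : ∀ (g : (∀ i, X i) → SetsK m k) (x : ∀ i, X i) (B : SetsK m k), 0 ≤ detS k g x B := by
    intro g x B; rw [detS]; split
    · exact zero_le_one
    · exact le_rfl
  have hn0 : ∀ g s, 0 ≤ n g s := by
    intro g s
    apply Finset.sum_nonneg
    intro x _
    split
    · exact mul_nonneg (hP0 x) (hdet0 g x A)
    · exact le_rfl
  have hNdet : ∀ g, Zsl k P (detS k g) A = ∑ s : ∀ i : A.1, X i.1, n g s := by
    intro g
    rw [hn_def]
    symm
    calc ∑ s : ∀ i : A.1, X i.1, ∑ x, (if restr A.1 x = s then P x * detS k g x A else 0)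
        = ∑ x, ∑ s : ∀ i : A.1, X i.1, (if restr A.1 x = s then P x * detS k g x A else 0) :=
          Finset.sum_comm
      _ = ∑ x, P x * detS k g x A := by
          refine Finset.sum_congr rfl fun x _ => ?_
          rw [Finset.sum_ite_eq, if_pos (Finset.mem_univ _)]
      _ = Zsl k P (detS k g) A := rfl
  have hndec : ∀ s : ∀ i : A.1, X i.1,
      (∑ x, if restr A.1 x = s then P x * σu x A else 0)
        = ∑ g : (∀ i, X i) → SetsK m k, lam k σu g * n g s := by
    intro s
    have h1 := lam_lin1 hσ (fun x => if restr A.1 x = s then P x else 0) A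
    calc (∑ x, if restr A.1 x = s then P x * σu x A else 0)
        = ∑ x, (if restr A.1 x = s then P x else 0) * σu x A := by
          refine Finset.sum_congr rfl fun x _ => ?_
          split <;> ring
      _ = ∑ g : (∀ i, X i) → SetsK m k, lam k σu g *
            (∑ x, (if restr A.1 x = s then P x else 0) * detS k g x A) := h1.symm
      _ = ∑ g : (∀ i, X i) → SetsK m k, lam k σu g * n g s := by
          refine Finset.sum_congr rfl fun g _ => ?_
          congr 1
          rw [hn_def]
          refine Finset.sum_congr rfl fun x _ => ?_
          split <;> ring
  have hZ : Zsl k P σu A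
      = ∑ g : (∀ i, X i) → SetsK m k, lam k σu g * ∑ s : ∀ i : A.1, X i.1, n g s := by
    rw [← Zsl_decomp hσ P A]
    exact Finset.sum_congr rfl fun g _ => by rw [hNdet g]
  have hQdet : ∀ g, Qsl k P (detS k g) Wu A
      = fun p : (∀ i : A.1, X i.1) × Y =>
          n g p.1 * Wu A p.1 p.2 / ∑ s : ∀ i : A.1, X i.1, n g s := by
    intro g
    funext p
    show (∑ x, if restr A.1 x = p.1 then P x * detS k g x A * Wu A p.1 p.2 else 0) /
        Zsl k P (detS k g) A = _
    rw [hNdet g]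
    congr 1
    calc (∑ x, if restr A.1 x = p.1 then P x * detS k g x A * Wu A p.1 p.2 else 0)
        = ∑ x, (if restr A.1 x = p.1 then P x * detS k g x A else 0) * Wu A p.1 p.2 := by
          refine Finset.sum_congr rfl fun x _ => ?_
          split <;> ring
      _ = n g p.1 * Wu A p.1 p.2 := by rw [← Finset.sum_mul]
  have hQσ : Qsl k P σu Wu A
      = fun p : (∀ i : A.1, X i.1) × Y =>
          (∑ g : (∀ i, X i) → SetsK m k, lam k σu g * n g p.1) * Wu A p.1 p.2 /
            ∑ g : (∀ i, X i) → SetsK m k, lam k σu g * ∑ s : ∀ i : A.1, X i.1, n g s := by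
    funext p
    show (∑ x, if restr A.1 x = p.1 then P x * σu x A * Wu A p.1 p.2 else 0) /
        Zsl k P σu A = _
    rw [hZ]
    congr 1
    calc (∑ x, if restr A.1 x = p.1 then P x * σu x A * Wu A p.1 p.2 else 0)
        = (∑ x, if restr A.1 x = p.1 then P x * σu x A else 0) * Wu A p.1 p.2 := by
          rw [Finset.sum_mul]
          refine Finset.sum_congr rfl fun x _ => ?_
          split <;> ring
      _ = _ := by rw [hndec p.1]
  calc ∑ g : (∀ i, X i) → SetsK m k,
        lam k σu g * (Zsl k P (detS k g) A * mutInfo (Qsl k P (detS k g) Wu A))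
      = ∑ g : (∀ i, X i) → SetsK m k, lam k σu g * ((∑ s : ∀ i : A.1, X i.1, n g s) *
          mutInfo (fun p : (∀ i : A.1, X i.1) × Y =>
            n g p.1 * Wu A p.1 p.2 / ∑ s : ∀ i : A.1, X i.1, n g s)) := by
        refine Finset.sum_congr rfl fun g _ => ?_
        rw [hNdet g, hQdet g]
    _ ≤ (∑ g : (∀ i, X i) → SetsK m k, lam k σu g * ∑ s : ∀ i : A.1, X i.1, n g s) *
          mutInfo (fun p : (∀ i : A.1, X i.1) × Y =>
            (∑ g : (∀ i, X i) → SetsK m k, lam k σu g * n g p.1) * Wu A p.1 p.2 /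
              ∑ g : (∀ i, X i) → SetsK m k, lam k σu g * ∑ s : ∀ i : A.1, X i.1, n g s) :=
        mi_superadd (lam k σu) (lam_nonneg hσ) n hn0 (fun s y => Wu A s y)
          (fun s y => (hWu A s).1 y) (fun s => (hWu A s).2)
    _ = Zsl k P σu A * mutInfo (Qsl k P σu Wu A) := by rw [hZ, hQσ]

end Stmt15Plumb

/-- with `𝒰 = {1,2,3}` and `Δ_min ≤ Δ ≤ Δ_max`, the minimum of
`I(X_S ∧ Y | S, U)` over triples `(P_U, σ, W)` with `E[d(X,Y)] ≤ Δ` equals the minimum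
over such triples whose sampler is a conditional point-mass `σ(A|x,u) = 1(A = h(x,u))`. -/
theorem stmt15 (k : ℕ) (hk1 : 1 ≤ k) (hkm : k ≤ m)
    (P : (∀ i, X i) → ℝ) (hP : IsPMF P) (hfull : ∀ x, 0 < P x)
    (d : (∀ i, X i) → Y → ℝ) (hd : ∀ x y, 0 ≤ d x y) (Δ : ℝ)
    (hmin : sInf {r | ∃ σ : (∀ i, X i) → SetsK m k → ℝ, (∀ x, IsPMF (σ x)) ∧
        (∑ A : SetsK m k, ∑ xA : ∀ i : A.1, X i.1,
          Finset.univ.inf' Finset.univ_nonempty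
            (fun y => ∑ x, if restr A.1 x = xA then P x * σ x A * d x y else 0)) = r} ≤ Δ)
    (hmax : Δ ≤ sInf {r | ∃ σ : (∀ i, X i) → SetsK m k → ℝ, (∀ x, IsPMF (σ x)) ∧
        (∑ A : SetsK m k,
          Finset.univ.inf' Finset.univ_nonempty
            (fun y => ∑ x, P x * σ x A * d x y)) = r}) :
    sInf {r | ∃ (PU : Fin 3 → ℝ) (σ : (∀ i, X i) → Fin 3 → SetsK m k → ℝ)
        (W : ∀ A : SetsK m k, (∀ i : A.1, X i.1) → Fin 3 → Y → ℝ),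
        IsPMF PU ∧ IsSamplerU k σ ∧ IsKernelWU k W ∧
        expDistMRS k P d PU σ W ≤ Δ ∧ condMIU k P PU σ W = r} =
    sInf {r | ∃ (PU : Fin 3 → ℝ) (h : (∀ i, X i) → Fin 3 → SetsK m k)
        (W : ∀ A : SetsK m k, (∀ i : A.1, X i.1) → Fin 3 → Y → ℝ),
        IsPMF PU ∧ IsKernelWU k W ∧
        expDistMRS k P d PU (fun x u A => if A = h x u then 1 else 0) W ≤ Δ ∧
        condMIU k P PU (fun x u A => if A = h x u then 1 else 0) W = r} := by
  classical
  obtain ⟨hP0, hP1⟩ := hP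
  obtain ⟨t0, -, ht0⟩ := Finset.exists_subset_card_eq (s := (Finset.univ : Finset (Fin m))) (n := k)
    (by simpa using hkm)
  have hdet0 : ∀ (g : (∀ i, X i) → SetsK m k) (x : ∀ i, X i), IsPMF (detS k g x) := by
    intro g x
    constructor
    · intro A
      show (0 : ℝ) ≤ if A = g x then 1 else 0
      split
      · exact zero_le_one
      · exact le_rfl
    · show (∑ A : SetsK m k, if A = g x then (1 : ℝ) else 0) = 1
      rw [Finset.sum_ite_eq', if_pos (Finset.mem_univ _)]
  have hdetU : ∀ (h : (∀ i, X i) → Fin 3 → SetsK m k),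
      IsSamplerU k (fun x u A => if A = h x u then (1 : ℝ) else 0) := by
    intro h x u
    exact hdet0 (fun x' => h x' u) x
  have hMIpos : ∀ (PU : Fin 3 → ℝ) (σ : (∀ i, X i) → Fin 3 → SetsK m k → ℝ)
      (W : ∀ A : SetsK m k, (∀ i : A.1, X i.1) → Fin 3 → Y → ℝ),
      IsPMF PU → IsSamplerU k σ → IsKernelWU k W → 0 ≤ condMIU k P PU σ W := by
    intro PU σ W h1 h2 h3
    rw [condMIU_slices]
    refine Finset.sum_nonneg fun u _ => mul_nonneg (h1.1 u) ?_
    exact Msl_nonneg P hP0 _ (fun x A => (h2 x u).1 A) _ (fun A s => h3 A s u)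
  -- minimizing deterministic sampler for the Δ_min expression
  obtain ⟨g₀, -, hg₀⟩ := Finset.exists_min_image
    (Finset.univ : Finset ((∀ i, X i) → SetsK m k))
    (fun g => ∑ A : SetsK m k, ∑ xA : ∀ i : A.1, X i.1,
      Finset.univ.inf' Finset.univ_nonempty
        (fun y => ∑ x, if restr A.1 x = xA then P x * detS k g x A * d x y else 0))
    ⟨fun _ => ⟨t0, ht0⟩, Finset.mem_univ _⟩
  have hval_ge : ∀ σ' : (∀ i, X i) → SetsK m k → ℝ, (∀ x, IsPMF (σ' x)) →
      (∑ A : SetsK m k, ∑ xA : ∀ i : A.1, X i.1,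
        Finset.univ.inf' Finset.univ_nonempty
          (fun y => ∑ x, if restr A.1 x = xA then P x * detS k g₀ x A * d x y else 0))
      ≤ ∑ A : SetsK m k, ∑ xA : ∀ i : A.1, X i.1,
        Finset.univ.inf' Finset.univ_nonempty
          (fun y => ∑ x, if restr A.1 x = xA then P x * σ' x A * d x y else 0) := by
    intro σ' hσ'
    have hL : ∀ (A : SetsK m k) (s : ∀ i : A.1, X i.1) (y : Y),
        (∑ x, if restr A.1 x = s then P x * σ' x A * d x y else 0)
          = ∑ g : (∀ i, X i) → SetsK m k, lam k σ' g *
              (∑ x, if restr A.1 x = s then P x * detS k g x A * d x y else 0) := by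
      intro A s y
      have h1 := lam_lin1 hσ' (fun x => if restr A.1 x = s then P x * d x y else 0) A
      calc (∑ x, if restr A.1 x = s then P x * σ' x A * d x y else 0)
          = ∑ x, (if restr A.1 x = s then P x * d x y else 0) * σ' x A :=
            Finset.sum_congr rfl fun x _ => by split <;> ring
        _ = ∑ g : (∀ i, X i) → SetsK m k, lam k σ' g *
              (∑ x, (if restr A.1 x = s then P x * d x y else 0) * detS k g x A) := h1.symm
        _ = ∑ g : (∀ i, X i) → SetsK m k, lam k σ' g *
              (∑ x, if restr A.1 x = s then P x * detS k g x A * d x y else 0) := by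
            refine Finset.sum_congr rfl fun g _ => ?_
            congr 1
            exact Finset.sum_congr rfl fun x _ => by split <;> ring
    have hinf : ∀ (A : SetsK m k) (s : ∀ i : A.1, X i.1),
        ∑ g : (∀ i, X i) → SetsK m k, lam k σ' g *
            Finset.univ.inf' Finset.univ_nonempty
              (fun y => ∑ x, if restr A.1 x = s then P x * detS k g x A * d x y else 0)
          ≤ Finset.univ.inf' Finset.univ_nonempty
              (fun y => ∑ x, if restr A.1 x = s then P x * σ' x A * d x y else 0) := by
      intro A s
      apply Finset.le_inf'
      intro y _
      rw [hL A s y]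
      refine Finset.sum_le_sum fun g _ => ?_
      exact mul_le_mul_of_nonneg_left (Finset.inf'_le _ (Finset.mem_univ y)) (lam_nonneg hσ' g)
    calc (∑ A : SetsK m k, ∑ xA : ∀ i : A.1, X i.1,
          Finset.univ.inf' Finset.univ_nonempty
            (fun y => ∑ x, if restr A.1 x = xA then P x * detS k g₀ x A * d x y else 0))
        = ∑ g : (∀ i, X i) → SetsK m k, lam k σ' g *
            (∑ A : SetsK m k, ∑ xA : ∀ i : A.1, X i.1,
              Finset.univ.inf' Finset.univ_nonempty
                (fun y => ∑ x, if restr A.1 x = xA then P x * detS k g₀ x A * d x y else 0)) := by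
          rw [← Finset.sum_mul, lam_sum_one hσ', one_mul]
      _ ≤ ∑ g : (∀ i, X i) → SetsK m k, lam k σ' g *
            (∑ A : SetsK m k, ∑ xA : ∀ i : A.1, X i.1,
              Finset.univ.inf' Finset.univ_nonempty
                (fun y => ∑ x, if restr A.1 x = xA then P x * detS k g x A * d x y else 0)) :=
          Finset.sum_le_sum fun g _ =>
            mul_le_mul_of_nonneg_left (hg₀ g (Finset.mem_univ g)) (lam_nonneg hσ' g)
      _ = ∑ A : SetsK m k, ∑ xA : ∀ i : A.1, X i.1,
            ∑ g : (∀ i, X i) → SetsK m k, lam k σ' g *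
              Finset.univ.inf' Finset.univ_nonempty
                (fun y => ∑ x, if restr A.1 x = xA then P x * detS k g x A * d x y else 0) := by
          calc ∑ g : (∀ i, X i) → SetsK m k, lam k σ' g *
                (∑ A : SetsK m k, ∑ xA : ∀ i : A.1, X i.1,
                  Finset.univ.inf' Finset.univ_nonempty
                    (fun y => ∑ x, if restr A.1 x = xA then P x * detS k g x A * d x y else 0))
              = ∑ g : (∀ i, X i) → SetsK m k, ∑ A : SetsK m k, ∑ xA : ∀ i : A.1, X i.1,
                  lam k σ' g * Finset.univ.inf' Finset.univ_nonempty
                    (fun y => ∑ x, if restr A.1 x = xA then P x * detS k g x A * d x y else 0) := by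
                refine Finset.sum_congr rfl fun g _ => ?_
                rw [Finset.mul_sum]
                exact Finset.sum_congr rfl fun A _ => Finset.mul_sum _ _ _
            _ = ∑ A : SetsK m k, ∑ g : (∀ i, X i) → SetsK m k, ∑ xA : ∀ i : A.1, X i.1,
                  lam k σ' g * Finset.univ.inf' Finset.univ_nonempty
                    (fun y => ∑ x, if restr A.1 x = xA then P x * detS k g x A * d x y else 0) :=
                Finset.sum_comm
            _ = ∑ A : SetsK m k, ∑ xA : ∀ i : A.1, X i.1,
                  ∑ g : (∀ i, X i) → SetsK m k,
                  lam k σ' g * Finset.univ.inf' Finset.univ_nonempty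
                    (fun y => ∑ x, if restr A.1 x = xA then P x * detS k g x A * d x y else 0) :=
                Finset.sum_congr rfl fun A _ => Finset.sum_comm
      _ ≤ ∑ A : SetsK m k, ∑ xA : ∀ i : A.1, X i.1,
            Finset.univ.inf' Finset.univ_nonempty
              (fun y => ∑ x, if restr A.1 x = xA then P x * σ' x A * d x y else 0) :=
          Finset.sum_le_sum fun A _ => Finset.sum_le_sum fun s _ => hinf A s
  have hg₀Δ : (∑ A : SetsK m k, ∑ xA : ∀ i : A.1, X i.1,
      Finset.univ.inf' Finset.univ_nonempty
        (fun y => ∑ x, if restr A.1 x = xA then P x * detS k g₀ x A * d x y else 0)) ≤ Δ := by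
    have h1 : (∑ A : SetsK m k, ∑ xA : ∀ i : A.1, X i.1,
        Finset.univ.inf' Finset.univ_nonempty
          (fun y => ∑ x, if restr A.1 x = xA then P x * detS k g₀ x A * d x y else 0))
        ≤ sInf {r | ∃ σ' : (∀ i, X i) → SetsK m k → ℝ, (∀ x, IsPMF (σ' x)) ∧
          (∑ A : SetsK m k, ∑ xA : ∀ i : A.1, X i.1,
            Finset.univ.inf' Finset.univ_nonempty
              (fun y => ∑ x, if restr A.1 x = xA then P x * σ' x A * d x y else 0)) = r} := by
      apply le_csInf
      · exact ⟨_, ⟨detS k g₀, hdet0 g₀, rfl⟩⟩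
      · rintro b ⟨σ', hσ', rfl⟩
        exact hval_ge σ' hσ'
    exact h1.trans hmin
  -- choice of optimal reconstruction points
  have hys : ∀ (A : SetsK m k) (s : ∀ i : A.1, X i.1), ∃ y : Y,
      Finset.univ.inf' Finset.univ_nonempty
        (fun y' => ∑ x, if restr A.1 x = s then P x * detS k g₀ x A * d x y' else 0)
      = ∑ x, if restr A.1 x = s then P x * detS k g₀ x A * d x y else 0 := by
    intro A s
    obtain ⟨y, -, hy⟩ := Finset.exists_mem_eq_inf' Finset.univ_nonempty
      (fun y' => ∑ x, if restr A.1 x = s then P x * detS k g₀ x A * d x y' else 0)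
    exact ⟨y, hy⟩
  choose ystar hystar using hys
  have sum_fin3_point : ∀ f : Fin 3 → ℝ,
      ∑ u : Fin 3, (if u = 0 then (1 : ℝ) else 0) * f u = f 0 := by
    intro f
    rw [Finset.sum_congr rfl (fun u _ =>
      show (if u = 0 then (1 : ℝ) else 0) * f u = if u = 0 then f u else 0 by
        split <;> simp)]
    rw [Finset.sum_ite_eq' Finset.univ (0 : Fin 3) f, if_pos (Finset.mem_univ _)]
  have hDval : Dsl k P d (fun x A => if A = g₀ x then (1 : ℝ) else 0)
      (fun A s y => if y = ystar A s then (1 : ℝ) else 0)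
      = ∑ A : SetsK m k, ∑ xA : ∀ i : A.1, X i.1,
        Finset.univ.inf' Finset.univ_nonempty
          (fun y => ∑ x, if restr A.1 x = xA then P x * detS k g₀ x A * d x y else 0) := by
    calc (Dsl k P d (fun x A => if A = g₀ x then (1 : ℝ) else 0)
          (fun A s y => if y = ystar A s then (1 : ℝ) else 0))
        = ∑ x, ∑ A : SetsK m k, P x * detS k g₀ x A * d x (ystar A (restr A.1 x)) := by
          simp only [Dsl]
          refine Finset.sum_congr rfl fun x _ => Finset.sum_congr rfl fun A _ => ?_
          calc ∑ y, P x * (if A = g₀ x then (1 : ℝ) else 0) *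
                (if y = ystar A (restr A.1 x) then (1 : ℝ) else 0) * d x y
              = ∑ y, if y = ystar A (restr A.1 x)
                  then P x * detS k g₀ x A * d x y else 0 := by
                refine Finset.sum_congr rfl fun y _ => ?_
                simp only [detS]
                by_cases h2 : y = ystar A (restr A.1 x) <;> simp [h2]
            _ = P x * detS k g₀ x A * d x (ystar A (restr A.1 x)) := by
                rw [Finset.sum_ite_eq' Finset.univ (ystar A (restr A.1 x))
                  (fun y => P x * detS k g₀ x A * d x y), if_pos (Finset.mem_univ _)]
      _ = ∑ A : SetsK m k, ∑ x, P x * detS k g₀ x A * d x (ystar A (restr A.1 x)) :=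
          Finset.sum_comm
      _ = ∑ A : SetsK m k, ∑ xA : ∀ i : A.1, X i.1,
            Finset.univ.inf' Finset.univ_nonempty
              (fun y => ∑ x, if restr A.1 x = xA then P x * detS k g₀ x A * d x y else 0) := by
          refine Finset.sum_congr rfl fun A _ => ?_
          symm
          calc ∑ xA : ∀ i : A.1, X i.1, Finset.univ.inf' Finset.univ_nonempty
                (fun y => ∑ x, if restr A.1 x = xA then P x * detS k g₀ x A * d x y else 0)
              = ∑ xA : ∀ i : A.1, X i.1, ∑ x,
                  if restr A.1 x = xA then P x * detS k g₀ x A * d x (ystar A xA) else 0 :=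
                Finset.sum_congr rfl fun xA _ => hystar A xA
            _ = ∑ x, ∑ xA : ∀ i : A.1, X i.1,
                  if restr A.1 x = xA then P x * detS k g₀ x A * d x (ystar A xA) else 0 :=
                Finset.sum_comm
            _ = ∑ x, P x * detS k g₀ x A * d x (ystar A (restr A.1 x)) := by
                refine Finset.sum_congr rfl fun x _ => ?_
                rw [Finset.sum_ite_eq, if_pos (Finset.mem_univ _)]
  have hPU₀pmf : IsPMF (fun u : Fin 3 => if u = 0 then (1 : ℝ) else 0) := by
    constructor
    · intro u
      dsimp only
      split
      · exact zero_le_one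
      · exact le_rfl
    · show (∑ u : Fin 3, if u = 0 then (1 : ℝ) else 0) = 1
      rw [Finset.sum_ite_eq' Finset.univ (0 : Fin 3) (fun _ => (1 : ℝ)),
        if_pos (Finset.mem_univ _)]
  have hW₀K : IsKernelWU k (fun (A : SetsK m k) (s : ∀ i : A.1, X i.1) (_ : Fin 3) y =>
      if y = ystar A s then (1 : ℝ) else 0) := by
    intro A s u
    constructor
    · intro y
      dsimp only
      split
      · exact zero_le_one
      · exact le_rfl
    · show (∑ y, if y = ystar A s then (1 : ℝ) else 0) = 1
      rw [Finset.sum_ite_eq' Finset.univ (ystar A s) (fun _ => (1 : ℝ)),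
        if_pos (Finset.mem_univ _)]
  have hbaseD : expDistMRS k P d (fun u : Fin 3 => if u = 0 then (1 : ℝ) else 0)
      (fun x (u : Fin 3) A => if A = g₀ x then (1 : ℝ) else 0)
      (fun A s (_ : Fin 3) y => if y = ystar A s then (1 : ℝ) else 0) ≤ Δ := by
    rw [expDist_slices]
    refine le_trans (le_of_eq (sum_fin3_point
      (fun _ => Dsl k P d (fun x A => if A = g₀ x then (1 : ℝ) else 0)
        (fun A s y => if y = ystar A s then (1 : ℝ) else 0)))) ?_
    rw [hDval]
    exact hg₀Δ
  set SL : Set ℝ := {r | ∃ (PU : Fin 3 → ℝ) (σ : (∀ i, X i) → Fin 3 → SetsK m k → ℝ)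
      (W : ∀ A : SetsK m k, (∀ i : A.1, X i.1) → Fin 3 → Y → ℝ),
      IsPMF PU ∧ IsSamplerU k σ ∧ IsKernelWU k W ∧
      expDistMRS k P d PU σ W ≤ Δ ∧ condMIU k P PU σ W = r} with hSL
  set SR : Set ℝ := {r | ∃ (PU : Fin 3 → ℝ) (h : (∀ i, X i) → Fin 3 → SetsK m k)
      (W : ∀ A : SetsK m k, (∀ i : A.1, X i.1) → Fin 3 → Y → ℝ),
      IsPMF PU ∧ IsKernelWU k W ∧
      expDistMRS k P d PU (fun x u A => if A = h x u then 1 else 0) W ≤ Δ ∧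
      condMIU k P PU (fun x u A => if A = h x u then 1 else 0) W = r} with hSR
  have hsub : SR ⊆ SL := by
    rintro r ⟨PU, h, W, h1, h2, h3, h4⟩
    exact ⟨PU, _, W, h1, hdetU h, h2, h3, h4⟩
  have hRne : SR.Nonempty :=
    ⟨_, ⟨_, (fun x (_ : Fin 3) => g₀ x), _, hPU₀pmf, hW₀K, hbaseD, rfl⟩⟩
  have hLne : SL.Nonempty := hRne.mono hsub
  have hbddL : BddBelow SL := by
    refine ⟨0, ?_⟩
    rintro r ⟨PU, σ, W, h1, h2, h3, -, h5⟩
    rw [← h5]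
    exact hMIpos PU σ W h1 h2 h3
  have hbddR : BddBelow SR := BddBelow.mono hsub hbddL
  apply le_antisymm
  · exact csInf_le_csInf hbddL hRne hsub
  · refine le_csInf hLne ?_
    rintro r ⟨PU, σ, W, hPUp, hσS, hWK, hDle, hMeq⟩
    set q : (Fin 3 × ((∀ i, X i) → SetsK m k)) → ℝ :=
      fun v => PU v.1 * lam k (fun x A => σ x v.1 A) v.2 with hq
    have hq0 : ∀ v, 0 ≤ q v := fun v =>
      mul_nonneg (hPUp.1 v.1) (lam_nonneg (fun x => hσS x v.1) v.2)
    have hq1 : ∑ v, q v = 1 := by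
      rw [Fintype.sum_prod_type]
      calc ∑ u : Fin 3, ∑ g : (∀ i, X i) → SetsK m k, q (u, g)
          = ∑ u : Fin 3, PU u := by
            refine Finset.sum_congr rfl fun u _ => ?_
            calc ∑ g : (∀ i, X i) → SetsK m k, q (u, g)
                = PU u * ∑ g : (∀ i, X i) → SetsK m k, lam k (fun x A => σ x u A) g := by
                  rw [Finset.mul_sum]
              _ = PU u := by rw [lam_sum_one (fun x => hσS x u), mul_one]
        _ = 1 := hPUp.2
    set Dv : (Fin 3 × ((∀ i, X i) → SetsK m k)) → ℝ :=
      fun v => Dsl k P d (detS k v.2) (fun A s => W A s v.1) with hDv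
    set Mv : (Fin 3 × ((∀ i, X i) → SetsK m k)) → ℝ :=
      fun v => Msl k P (detS k v.2) (fun A s => W A s v.1) with hMv
    have hzD : ∑ v, q v * Dv v ≤ Δ := by
      calc ∑ v, q v * Dv v
          = ∑ u : Fin 3, PU u * Dsl k P d (fun x A => σ x u A) (fun A s => W A s u) := by
            rw [Fintype.sum_prod_type]
            refine Finset.sum_congr rfl fun u _ => ?_
            calc ∑ g : (∀ i, X i) → SetsK m k, q (u, g) * Dv (u, g)
                = PU u * ∑ g : (∀ i, X i) → SetsK m k,
                    lam k (fun x A => σ x u A) g *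
                      Dsl k P d (detS k g) (fun A s => W A s u) := by
                  rw [Finset.mul_sum]
                  exact Finset.sum_congr rfl fun g _ => mul_assoc _ _ _
              _ = PU u * Dsl k P d (fun x A => σ x u A) (fun A s => W A s u) := by
                  rw [Dsl_decomp (fun x => hσS x u)]
        _ = expDistMRS k P d PU σ W := (expDist_slices P d PU σ W).symm
        _ ≤ Δ := hDle
    have hzM : ∑ v, q v * Mv v ≤ r := by
      calc ∑ v, q v * Mv v
          = ∑ u : Fin 3, PU u * ∑ g : (∀ i, X i) → SetsK m k,
              lam k (fun x A => σ x u A) g * Msl k P (detS k g) (fun A s => W A s u) := by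
            rw [Fintype.sum_prod_type]
            refine Finset.sum_congr rfl fun u _ => ?_
            rw [Finset.mul_sum]
            exact Finset.sum_congr rfl fun g _ => mul_assoc _ _ _
        _ ≤ ∑ u : Fin 3, PU u * Msl k P (fun x A => σ x u A) (fun A s => W A s u) :=
            Finset.sum_le_sum fun u _ => mul_le_mul_of_nonneg_left
              (Msl_le P hP0 _ (fun x => hσS x u) _ (fun A s => hWK A s u)) (hPUp.1 u)
        _ = condMIU k P PU σ W := (condMIU_slices P PU σ W).symm
        _ = r := hMeq
    set F : (Fin 3 × ((∀ i, X i) → SetsK m k)) → ℝ × ℝ := fun v => (Dv v, Mv v) with hF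
    have hzmem : (∑ v, q v • F v) ∈ convexHull ℝ (Set.range F) := by
      rw [← Finset.centerMass_eq_of_sum_1 Finset.univ F hq1]
      exact Finset.centerMass_mem_convexHull Finset.univ (fun v _ => hq0 v)
        (by rw [hq1]; exact one_pos) (fun v _ => Set.mem_range_self v)
    obtain ⟨ι, hι, zf, wf, hrange, haff, hwpos, hwsum, hrep⟩ :=
      eq_pos_convex_span_of_mem_convexHull hzmem
    have hcard : Fintype.card ι ≤ 3 := by
      have h1 := haff.card_le_finrank_succ
      have h2 : Module.finrank ℝ (vectorSpan ℝ (Set.range zf))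
          ≤ Module.finrank ℝ (ℝ × ℝ) := Submodule.finrank_le _
      have h3 : Module.finrank ℝ (ℝ × ℝ) = 2 := by
        rw [Module.finrank_prod, Module.finrank_self]
      omega
    let e := Fintype.equivFin ι
    let emb : ι → Fin 3 := fun i => Fin.castLE hcard (e i)
    have hembinj : Function.Injective emb := fun i j hij =>
      e.injective (Fin.castLE_injective hcard hij)
    have hvex : ∀ i : ι, ∃ v, F v = zf i := fun i => hrange (Set.mem_range_self i)
    choose vz hvzp using hvex
    let vv : Fin 3 → Fin 3 × ((∀ i, X i) → SetsK m k) := fun j =>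
      if hj : ∃ i, emb i = j then vz hj.choose else (0, fun _ => ⟨t0, ht0⟩)
    have hvv : ∀ i, vv (emb i) = vz i := by
      intro i
      have hj : ∃ i', emb i' = emb i := ⟨i, rfl⟩
      show (if hj' : ∃ i', emb i' = emb i then vz hj'.choose
        else (0, fun _ => ⟨t0, ht0⟩)) = vz i
      rw [dif_pos hj]
      exact congrArg vz (hembinj hj.choose_spec)
    set μ : Fin 3 → ℝ := fun j => ∑ i, if emb i = j then wf i else 0 with hμ
    have hμ0 : ∀ j, 0 ≤ μ j := fun j => Finset.sum_nonneg fun i _ => by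
      split
      · exact (hwpos i).le
      · exact le_rfl
    have hμ1 : ∑ j, μ j = 1 := by
      calc ∑ j : Fin 3, ∑ i, (if emb i = j then wf i else 0)
          = ∑ i, ∑ j : Fin 3, (if emb i = j then wf i else 0) := Finset.sum_comm
        _ = ∑ i, wf i := by
            refine Finset.sum_congr rfl fun i _ => ?_
            rw [Finset.sum_ite_eq, if_pos (Finset.mem_univ _)]
        _ = 1 := hwsum
    have hproj1 : ∀ {κ : Type} [Fintype κ] (w' : κ → ℝ) (z' : κ → ℝ × ℝ),
        (∑ i, w' i • z' i).1 = ∑ i, w' i * (z' i).1 := by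
      intro κ _ w' z'
      exact map_sum (AddMonoidHom.fst ℝ ℝ) (fun i => w' i • z' i) Finset.univ
    have hproj2 : ∀ {κ : Type} [Fintype κ] (w' : κ → ℝ) (z' : κ → ℝ × ℝ),
        (∑ i, w' i • z' i).2 = ∑ i, w' i * (z' i).2 := by
      intro κ _ w' z'
      exact map_sum (AddMonoidHom.snd ℝ ℝ) (fun i => w' i • z' i) Finset.univ
    have hgen : ∀ c : (Fin 3 × ((∀ i, X i) → SetsK m k)) → ℝ,
        ∑ j, μ j * c (vv j) = ∑ i, wf i * c (vz i) := by
      intro c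
      calc ∑ j, μ j * c (vv j)
          = ∑ j, ∑ i, (if emb i = j then wf i * c (vv j) else 0) := by
            refine Finset.sum_congr rfl fun j _ => ?_
            rw [Finset.sum_mul]
            refine Finset.sum_congr rfl fun i _ => ?_
            split <;> simp
        _ = ∑ i, ∑ j, (if emb i = j then wf i * c (vv j) else 0) := Finset.sum_comm
        _ = ∑ i, wf i * c (vv (emb i)) := by
            refine Finset.sum_congr rfl fun i _ => ?_
            rw [Finset.sum_ite_eq, if_pos (Finset.mem_univ _)]
        _ = ∑ i, wf i * c (vz i) := Finset.sum_congr rfl fun i _ => by rw [hvv i]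
    have hDrep : ∑ j, μ j * Dv (vv j) = ∑ v, q v * Dv v := by
      rw [hgen Dv]
      have h2 : ∑ i, wf i * Dv (vz i) = ∑ i, wf i * (zf i).1 :=
        Finset.sum_congr rfl fun i _ => by rw [← hvzp i]
      have h3 := congrArg Prod.fst hrep
      rw [hproj1, hproj1] at h3
      exact h2.trans h3
    have hMrep : ∑ j, μ j * Mv (vv j) = ∑ v, q v * Mv v := by
      rw [hgen Mv]
      have h2 : ∑ i, wf i * Mv (vz i) = ∑ i, wf i * (zf i).2 :=
        Finset.sum_congr rfl fun i _ => by rw [← hvzp i]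
      have h3 := congrArg Prod.snd hrep
      rw [hproj2, hproj2] at h3
      exact h2.trans h3
    have hfinD : expDistMRS k P d μ
        (fun x (u : Fin 3) A => if A = (vv u).2 x then (1 : ℝ) else 0)
        (fun A s (u : Fin 3) y => W A s (vv u).1 y) ≤ Δ := by
      rw [expDist_slices]
      calc ∑ u : Fin 3, μ u * Dsl k P d
            (fun x A => if A = (vv u).2 x then (1 : ℝ) else 0)
            (fun A s => W A s (vv u).1)
          = ∑ j, μ j * Dv (vv j) := rfl
        _ = ∑ v, q v * Dv v := hDrep
        _ ≤ Δ := hzD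
    have hfinM : condMIU k P μ
        (fun x (u : Fin 3) A => if A = (vv u).2 x then (1 : ℝ) else 0)
        (fun A s (u : Fin 3) y => W A s (vv u).1 y) = ∑ j, μ j * Mv (vv j) := by
      rw [condMIU_slices]
      rfl
    have hmem : condMIU k P μ
        (fun x (u : Fin 3) A => if A = (vv u).2 x then (1 : ℝ) else 0)
        (fun A s (u : Fin 3) y => W A s (vv u).1 y) ∈ SR := by
      rw [hSR]
      refine ⟨μ, (fun x u => (vv u).2 x), (fun A s u y => W A s (vv u).1 y),
        ⟨hμ0, hμ1⟩, (fun A s u => hWK A s (vv u).1), hfinD, rfl⟩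
    calc sInf SR ≤ condMIU k P μ
          (fun x (u : Fin 3) A => if A = (vv u).2 x then (1 : ℝ) else 0)
          (fun A s (u : Fin 3) y => W A s (vv u).1 y) := csInf_le hbddR hmem
      _ = ∑ j, μ j * Mv (vv j) := hfinM
      _ = ∑ v, q v * Mv v := hMrep
      _ ≤ r := hzM
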